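/- For n≥2, the group G presented by generators s_1,…,s_n, a, f and relations: s_is_j=s_js_i for |i−j|≥2; s_is_{i+1}s_i=s_{i+1}s_is_{i+1} for 1≤i≤n−1; s_ia=as_i for 2≤i≤n−1; s_1as_1=as_1a; s_nas_n=as_na; fs_if^{-1}=s_{i+1} for 1≤i≤n−1; fs_nf^{-1}=a; faf^{-1}=s_1, is isomorphic to the B-type braid group B(B_{n+1}) via the map sending s_i ↦ σ_i, a ↦ a_{n+1} and f ↦ φ_{n+1}, where φ_{n+1} = tσ_1⋯σ_n and a_{n+1} = φ_{n+1}σ_nφ_{n+1}^{-1}. -/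

import Mathlib

/-- Relators of the `B`-type braid group `B(B_{n+1})`: generator `some i` (`i : Fin n`)
stands for `σ_{i+1}`, and `none` stands for `t`. -/
def braidRelsB (n : ℕ) : Set (FreeGroup (Option (Fin n))) :=
  { r | (∃ i j : Fin n, (i : ℕ) + 2 ≤ (j : ℕ) ∧
          r = FreeGroup.of (some i) * FreeGroup.of (some j) *
              (FreeGroup.of (some j) * FreeGroup.of (some i))⁻¹) ∨
        (∃ i j : Fin n, (j : ℕ) = (i : ℕ) + 1 ∧
          r = FreeGroup.of (some i) * FreeGroup.of (some j) * FreeGroup.of (some i) *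
              (FreeGroup.of (some j) * FreeGroup.of (some i) * FreeGroup.of (some j))⁻¹) ∨
        (∃ i : Fin n, 1 ≤ (i : ℕ) ∧
          r = FreeGroup.of (some i) * FreeGroup.of none *
              (FreeGroup.of none * FreeGroup.of (some i))⁻¹) ∨
        (∃ i : Fin n, (i : ℕ) = 0 ∧
          r = FreeGroup.of (some i) * FreeGroup.of none * FreeGroup.of (some i) *
              FreeGroup.of none *
              (FreeGroup.of none * FreeGroup.of (some i) * FreeGroup.of none *
                FreeGroup.of (some i))⁻¹) }

/-- The `B`-type braid group `B(B_{n+1})`, with generators `σ_1, …, σ_n` and `t`. -/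
abbrev BraidB (n : ℕ) : Type := PresentedGroup (braidRelsB n)

/-- `φ_{n+1} = t σ_1 σ_2 ⋯ σ_n` in `B(B_{n+1})`. -/
noncomputable def phiB (n : ℕ) : BraidB n :=
  PresentedGroup.of none *
    ((List.finRange n).map fun i => (PresentedGroup.of (some i) : BraidB n)).prod

/-- `a_{n+1} = φ_{n+1} σ_n φ_{n+1}⁻¹` in `B(B_{n+1})`. -/
noncomputable def aB (n : ℕ) (h : 0 < n) : BraidB n :=
  phiB n * PresentedGroup.of (some (⟨n - 1, by omega⟩ : Fin n)) * (phiB n)⁻¹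

/-- Relators of the alternative presentation of `B(B_{n+1})`, on generators
`Sum.inl i` (`i : Fin n`, standing for `s_{i+1}`), `Sum.inr false` (standing for `a`) and
`Sum.inr true` (standing for `f`). -/
def gRels (n : ℕ) : Set (FreeGroup (Fin n ⊕ Bool)) :=
  { r | (∃ i j : Fin n, (i : ℕ) + 2 ≤ (j : ℕ) ∧
          r = FreeGroup.of (Sum.inl i) * FreeGroup.of (Sum.inl j) *
              (FreeGroup.of (Sum.inl j) * FreeGroup.of (Sum.inl i))⁻¹) ∨
        (∃ i j : Fin n, (j : ℕ) = (i : ℕ) + 1 ∧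
          r = FreeGroup.of (Sum.inl i) * FreeGroup.of (Sum.inl j) * FreeGroup.of (Sum.inl i) *
              (FreeGroup.of (Sum.inl j) * FreeGroup.of (Sum.inl i) *
                FreeGroup.of (Sum.inl j))⁻¹) ∨
        (∃ i : Fin n, 1 ≤ (i : ℕ) ∧ (i : ℕ) + 2 ≤ n ∧
          r = FreeGroup.of (Sum.inl i) * FreeGroup.of (Sum.inr false) *
              (FreeGroup.of (Sum.inr false) * FreeGroup.of (Sum.inl i))⁻¹) ∨
        (∃ i : Fin n, ((i : ℕ) = 0 ∨ (i : ℕ) + 1 = n) ∧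
          r = FreeGroup.of (Sum.inl i) * FreeGroup.of (Sum.inr false) *
              FreeGroup.of (Sum.inl i) *
              (FreeGroup.of (Sum.inr false) * FreeGroup.of (Sum.inl i) *
                FreeGroup.of (Sum.inr false))⁻¹) ∨
        (∃ i j : Fin n, (j : ℕ) = (i : ℕ) + 1 ∧
          r = FreeGroup.of (Sum.inr true) * FreeGroup.of (Sum.inl i) *
              (FreeGroup.of (Sum.inr true))⁻¹ * (FreeGroup.of (Sum.inl j))⁻¹) ∨
        (∃ i : Fin n, (i : ℕ) + 1 = n ∧
          r = FreeGroup.of (Sum.inr true) * FreeGroup.of (Sum.inl i) *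
              (FreeGroup.of (Sum.inr true))⁻¹ * (FreeGroup.of (Sum.inr false))⁻¹) ∨
        (∃ i : Fin n, (i : ℕ) = 0 ∧
          r = FreeGroup.of (Sum.inr true) * FreeGroup.of (Sum.inr false) *
              (FreeGroup.of (Sum.inr true))⁻¹ * (FreeGroup.of (Sum.inl i))⁻¹) }



namespace Stmt1Aux

variable {M : Type*} [Group M]

/-- `wprod σ a l = σ a * σ (a+1) * ⋯ * σ (a+l-1)`. -/
def wprod (σ : ℕ → M) (a l : ℕ) : M := ((List.range' a l).map σ).prod

lemma wprod_succ_left (σ : ℕ → M) (a l : ℕ) :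
    wprod σ a (l + 1) = σ a * wprod σ (a + 1) l := by
  simp [wprod, List.range'_succ]

lemma wprod_append (σ : ℕ → M) (a l₁ l₂ : ℕ) :
    wprod σ a (l₁ + l₂) = wprod σ a l₁ * wprod σ (a + l₁) l₂ := by
  rw [wprod, wprod, wprod, ← List.prod_append, ← List.map_append]
  congr 1
  have h : List.range' a l₁ 1 ++ List.range' (a + 1 * l₁) l₂ 1 = List.range' a (l₁ + l₂) 1 :=
    List.range'_append
  rw [Nat.one_mul] at h
  rw [← h]

lemma wprod_one (σ : ℕ → M) (a : ℕ) : wprod σ a 1 = σ a := by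
  simp [wprod, List.range']

lemma wprod_two (σ : ℕ → M) (a : ℕ) : wprod σ a 2 = σ a * σ (a + 1) := by
  simp [wprod, List.range']

lemma commute_wprod {x : M} {σ : ℕ → M} {a l : ℕ}
    (h : ∀ j, a ≤ j → j < a + l → Commute x (σ j)) : Commute x (wprod σ a l) := by
  apply Commute.list_prod_right
  intro y hy
  simp only [List.mem_map, List.mem_range'] at hy
  obtain ⟨j, ⟨i, hi, rfl⟩, rfl⟩ := hy
  exact h _ (by omega) (by omega)

section Braid

variable (n : ℕ) (σ : ℕ → M)
variable (hcomm : ∀ i j, 1 ≤ i → i + 2 ≤ j → j ≤ n → σ i * σ j = σ j * σ i)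
variable (hbraid : ∀ i, 1 ≤ i → i + 1 ≤ n → σ i * σ (i+1) * σ i = σ (i+1) * σ i * σ (i+1))

include hcomm hbraid in
/-- shift: `(σ_1 ⋯ σ_n) σ_i = σ_{i+1} (σ_1 ⋯ σ_n)` for `1 ≤ i ≤ n-1`. -/
lemma shift (i : ℕ) (h1 : 1 ≤ i) (h2 : i + 1 ≤ n) :
    wprod σ 1 n * σ i = σ (i+1) * wprod σ 1 n := by
  have A : wprod σ 1 n = wprod σ 1 (i-1) * σ i * σ (i+1) * wprod σ (i+2) (n-i-1) := by
    have e1 := wprod_append σ 1 (i+1) (n-i-1)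
    rw [show (i+1) + (n-i-1) = n by omega, show 1 + (i+1) = i + 2 by omega] at e1
    have e2 := wprod_append σ 1 (i-1) 2
    rw [show (i-1) + 2 = i + 1 by omega, show 1 + (i-1) = i by omega, wprod_two] at e2
    rw [e1, e2]; simp only [mul_assoc]
  set X := wprod σ 1 (i-1) with hX
  set W := wprod σ (i+2) (n-i-1) with hW
  have hc1 : σ i * W = W * σ i := by
    refine (commute_wprod fun j hj1 hj2 => ?_)
    exact hcomm i j h1 hj1 (by omega)
  have hc2 : X * σ (i+1) = σ (i+1) * X := by
    refine (commute_wprod (x := σ (i+1)) (fun j hj1 hj2 => ?_)).symm.eq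
    exact (hcomm j (i+1) hj1 (by omega) h2).symm
  calc wprod σ 1 n * σ i = (X * σ i * σ (i+1)) * (W * σ i) := by
        rw [A]; simp only [mul_assoc]
    _ = (X * σ i * σ (i+1)) * (σ i * W) := by rw [← hc1]
    _ = X * (σ i * σ (i+1) * σ i) * W := by simp only [mul_assoc]
    _ = X * (σ (i+1) * σ i * σ (i+1)) * W := by rw [hbraid i h1 h2]
    _ = (X * σ (i+1)) * (σ i * (σ (i+1) * W)) := by simp only [mul_assoc]
    _ = (σ (i+1) * X) * (σ i * (σ (i+1) * W)) := by rw [hc2]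
    _ = σ (i+1) * (X * σ i * σ (i+1) * W) := by simp only [mul_assoc]
    _ = σ (i+1) * wprod σ 1 n := by rw [← A]

include hcomm hbraid in
/-- Claim C: for `1 ≤ k`, `k + d = n`, `1 ≤ d`, with `W = σ_{k+1} ⋯ σ_n`:
`W σ_k W σ_n = σ_k W σ_k W`. -/
lemma claimC : ∀ d k, 1 ≤ d → 1 ≤ k → k + d = n →
    wprod σ (k+1) d * σ k * wprod σ (k+1) d * σ n
      = σ k * wprod σ (k+1) d * σ k * wprod σ (k+1) d := by
  intro d
  induction d with
  | zero => omega
  | succ d ih =>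
    intro k _ hk hkn
    rcases Nat.eq_zero_or_pos d with hd0 | hd1
    · subst hd0
      have hk1 : k + 1 = n := by omega
      rw [wprod_one, ← hk1]
      have hb := hbraid k hk (by omega)
      calc σ (k+1) * σ k * σ (k+1) * σ (k+1)
          = (σ (k+1) * σ k * σ (k+1)) * σ (k+1) := by simp only [mul_assoc]
        _ = (σ k * σ (k+1) * σ k) * σ (k+1) := by rw [← hb]
        _ = σ k * σ (k+1) * σ k * σ (k+1) := by simp only [mul_assoc]
    · have hWd : wprod σ (k+1) (d+1) = σ (k+1) * wprod σ (k+2) d := by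
        rw [wprod_succ_left, show k+1+1 = k+2 by omega]
      set W := wprod σ (k+2) d with hW
      have hcW : σ k * W = W * σ k := by
        refine (commute_wprod fun j hj1 hj2 => ?_)
        exact hcomm k j hk (by omega) (by omega)
      have ihh := ih (k+1) hd1 (by omega) (by omega)
      rw [show k+1+1 = k+2 by omega] at ihh
      have hb := hbraid k hk (by omega)
      rw [hWd]
      calc σ (k+1) * W * σ k * (σ (k+1) * W) * σ n
          = σ (k+1) * (W * σ k) * (σ (k+1) * W * σ n) := by simp only [mul_assoc]
        _ = σ (k+1) * (σ k * W) * (σ (k+1) * W * σ n) := by rw [← hcW]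
        _ = (σ (k+1) * σ k) * (W * σ (k+1) * W * σ n) := by simp only [mul_assoc]
        _ = (σ (k+1) * σ k) * (σ (k+1) * W * σ (k+1) * W) := by rw [ihh]
        _ = (σ (k+1) * σ k * σ (k+1)) * (W * σ (k+1) * W) := by simp only [mul_assoc]
        _ = (σ k * σ (k+1) * σ k) * (W * σ (k+1) * W) := by rw [← hb]
        _ = σ k * σ (k+1) * (σ k * W) * (σ (k+1) * W) := by simp only [mul_assoc]
        _ = σ k * σ (k+1) * (W * σ k) * (σ (k+1) * W) := by rw [hcW]
        _ = σ k * (σ (k+1) * W) * σ k * (σ (k+1) * W) := by simp only [mul_assoc]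

section BSystem

variable (t : M) (hn : 2 ≤ n)
variable (htc : ∀ i, 2 ≤ i → i ≤ n → σ i * t = t * σ i)
variable (ht4 : σ 1 * t * σ 1 * t = t * σ 1 * t * σ 1)

include hn in
lemma S_eq : wprod σ 1 n = σ 1 * wprod σ 2 (n-1) := by
  have h := wprod_succ_left σ 1 (n-1)
  rw [show (n-1)+1 = n by omega] at h
  exact h

include htc hn in
lemma tQ : t * wprod σ 2 (n-1) = wprod σ 2 (n-1) * t :=
  commute_wprod fun j hj1 hj2 => (htc j hj1 (by omega)).symm

include hcomm hbraid htc hn in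
lemma phi_shift (i : ℕ) (h1 : 1 ≤ i) (h2 : i + 1 ≤ n) :
    (t * wprod σ 1 n) * σ i = σ (i+1) * (t * wprod σ 1 n) := by
  rw [mul_assoc, shift n σ hcomm hbraid i h1 h2, ← mul_assoc,
    ← htc (i+1) (by omega) h2, mul_assoc]

include hcomm hbraid htc ht4 hn in
lemma phi_sq : σ 1 * ((t * wprod σ 1 n) * (t * wprod σ 1 n))
    = ((t * wprod σ 1 n) * (t * wprod σ 1 n)) * σ n := by
  set Q := wprod σ 2 (n-1) with hQ
  have hS : wprod σ 1 n = σ 1 * Q := S_eq n σ hn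
  have htQ : t * Q = Q * t := tQ n σ t hn htc
  have hC : Q * σ 1 * Q * σ n = σ 1 * Q * σ 1 * Q := by
    have := claimC n σ hcomm hbraid (n-1) 1 (by omega) le_rfl (by omega)
    rw [show (1:ℕ)+1 = 2 by norm_num] at this
    exact this
  have hphi2 : (t * wprod σ 1 n) * (t * wprod σ 1 n) = t * σ 1 * t * (Q * σ 1 * Q) := by
    rw [hS]
    calc (t * (σ 1 * Q)) * (t * (σ 1 * Q))
        = t * σ 1 * (Q * t) * (σ 1 * Q) := by simp only [mul_assoc]
      _ = t * σ 1 * (t * Q) * (σ 1 * Q) := by rw [← htQ]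
      _ = t * σ 1 * t * (Q * σ 1 * Q) := by simp only [mul_assoc]
  rw [hphi2]
  calc σ 1 * (t * σ 1 * t * (Q * σ 1 * Q))
      = (σ 1 * t * σ 1 * t) * (Q * σ 1 * Q) := by simp only [mul_assoc]
    _ = (t * σ 1 * t * σ 1) * (Q * σ 1 * Q) := by rw [ht4]
    _ = (t * σ 1 * t) * (σ 1 * Q * σ 1 * Q) := by simp only [mul_assoc]
    _ = (t * σ 1 * t) * (Q * σ 1 * Q * σ n) := by rw [← hC]
    _ = t * σ 1 * t * (Q * σ 1 * Q) * σ n := by simp only [mul_assoc]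

include hcomm hbraid htc ht4 hn in
lemma phi_a :
    (t * wprod σ 1 n) * ((t * wprod σ 1 n) * σ n * (t * wprod σ 1 n)⁻¹)
      = σ 1 * (t * wprod σ 1 n) := by
  set φ := t * wprod σ 1 n with hφ
  have h := phi_sq n σ hcomm hbraid t hn htc ht4
  calc φ * (φ * σ n * φ⁻¹) = (φ * φ) * σ n * φ⁻¹ := by simp only [mul_assoc]
    _ = σ 1 * (φ * φ) * φ⁻¹ := by rw [← h]
    _ = σ 1 * φ := by group

include hcomm hbraid htc hn in
lemma phi_conj (i : ℕ) (h1 : 1 ≤ i) (h2 : i + 1 ≤ n) :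
    (t * wprod σ 1 n) * σ i * (t * wprod σ 1 n)⁻¹ = σ (i+1) := by
  rw [phi_shift n σ hcomm hbraid t hn htc i h1 h2]
  group

include hcomm hbraid htc ht4 hn in
lemma phi_aconj :
    (t * wprod σ 1 n) * ((t * wprod σ 1 n) * σ n * (t * wprod σ 1 n)⁻¹)
      * (t * wprod σ 1 n)⁻¹ = σ 1 := by
  rw [phi_a n σ hcomm hbraid t hn htc ht4]
  group

lemma conj_inj (φ : M) : Function.Injective (fun x : M => φ * x * φ⁻¹) := by
  intro x y h
  simpa using congrArg (fun z => φ⁻¹ * z * φ) h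

include hcomm hbraid htc ht4 hn in
lemma a_comm (i : ℕ) (h1 : 2 ≤ i) (h2 : i + 1 ≤ n) :
    σ i * ((t * wprod σ 1 n) * σ n * (t * wprod σ 1 n)⁻¹)
      = ((t * wprod σ 1 n) * σ n * (t * wprod σ 1 n)⁻¹) * σ i := by
  set φ := t * wprod σ 1 n with hφ
  set A := φ * σ n * φ⁻¹ with hA
  apply conj_inj φ
  have ci : φ * σ i * φ⁻¹ = σ (i+1) := phi_conj n σ hcomm hbraid t hn htc (i) (by omega) h2
  have cA : φ * A * φ⁻¹ = σ 1 := phi_aconj n σ hcomm hbraid t hn htc ht4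
  have hc : σ 1 * σ (i+1) = σ (i+1) * σ 1 := hcomm 1 (i+1) le_rfl (by omega) (by omega)
  show φ * (σ i * A) * φ⁻¹ = φ * (A * σ i) * φ⁻¹
  calc φ * (σ i * A) * φ⁻¹ = (φ * σ i * φ⁻¹) * (φ * A * φ⁻¹) := by group
    _ = σ (i+1) * σ 1 := by rw [ci, cA]
    _ = σ 1 * σ (i+1) := by rw [← hc]
    _ = (φ * A * φ⁻¹) * (φ * σ i * φ⁻¹) := by rw [ci, cA]
    _ = φ * (A * σ i) * φ⁻¹ := by group

include hcomm hbraid htc ht4 hn in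
lemma a_rel1 :
    σ 1 * ((t * wprod σ 1 n) * σ n * (t * wprod σ 1 n)⁻¹) * σ 1
      = ((t * wprod σ 1 n) * σ n * (t * wprod σ 1 n)⁻¹) * σ 1 *
        ((t * wprod σ 1 n) * σ n * (t * wprod σ 1 n)⁻¹) := by
  set φ := t * wprod σ 1 n with hφ
  set A := φ * σ n * φ⁻¹ with hA
  apply conj_inj φ
  have c1 : φ * σ 1 * φ⁻¹ = σ 2 := by
    have := phi_conj n σ hcomm hbraid t hn htc 1 le_rfl hn
    rwa [show (1:ℕ)+1 = 2 by norm_num] at this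
  have cA : φ * A * φ⁻¹ = σ 1 := phi_aconj n σ hcomm hbraid t hn htc ht4
  have hb : σ 1 * σ 2 * σ 1 = σ 2 * σ 1 * σ 2 := by
    have := hbraid 1 le_rfl hn
    rwa [show (1:ℕ)+1 = 2 by norm_num] at this
  show φ * (σ 1 * A * σ 1) * φ⁻¹ = φ * (A * σ 1 * A) * φ⁻¹
  calc φ * (σ 1 * A * σ 1) * φ⁻¹
      = (φ * σ 1 * φ⁻¹) * (φ * A * φ⁻¹) * (φ * σ 1 * φ⁻¹) := by group
    _ = σ 2 * σ 1 * σ 2 := by rw [c1, cA]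
    _ = σ 1 * σ 2 * σ 1 := by rw [← hb]
    _ = (φ * A * φ⁻¹) * (φ * σ 1 * φ⁻¹) * (φ * A * φ⁻¹) := by rw [c1, cA]
    _ = φ * (A * σ 1 * A) * φ⁻¹ := by group

include hcomm hbraid htc ht4 hn in
lemma a_reln :
    σ n * ((t * wprod σ 1 n) * σ n * (t * wprod σ 1 n)⁻¹) * σ n
      = ((t * wprod σ 1 n) * σ n * (t * wprod σ 1 n)⁻¹) * σ n *
        ((t * wprod σ 1 n) * σ n * (t * wprod σ 1 n)⁻¹) := by
  set φ := t * wprod σ 1 n with hφ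
  set A := φ * σ n * φ⁻¹ with hA
  apply conj_inj φ
  have cn : φ * σ n * φ⁻¹ = A := rfl
  have cA : φ * A * φ⁻¹ = σ 1 := phi_aconj n σ hcomm hbraid t hn htc ht4
  have hr1 : σ 1 * A * σ 1 = A * σ 1 * A := a_rel1 n σ hcomm hbraid t hn htc ht4
  show φ * (σ n * A * σ n) * φ⁻¹ = φ * (A * σ n * A) * φ⁻¹
  calc φ * (σ n * A * σ n) * φ⁻¹
      = (φ * σ n * φ⁻¹) * (φ * A * φ⁻¹) * (φ * σ n * φ⁻¹) := by group
    _ = A * σ 1 * A := by rw [cn, cA]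
    _ = σ 1 * A * σ 1 := by rw [← hr1]
    _ = (φ * A * φ⁻¹) * (φ * σ n * φ⁻¹) * (φ * A * φ⁻¹) := by rw [cn, cA]
    _ = φ * (A * σ n * A) * φ⁻¹ := by group

end BSystem

section GSystem

variable (a f : M) (hn : 2 ≤ n)
variable (hfs : ∀ i, 1 ≤ i → i + 1 ≤ n → f * σ i * f⁻¹ = σ (i+1))
variable (hfn : f * σ n * f⁻¹ = a)
variable (hfa : f * a * f⁻¹ = σ 1)

include hcomm hbraid hfs in
lemma T_comm (i : ℕ) (h1 : 2 ≤ i) (h2 : i ≤ n) :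
    σ i * (f * (wprod σ 1 n)⁻¹) = (f * (wprod σ 1 n)⁻¹) * σ i := by
  set S := wprod σ 1 n with hS
  have hsh := shift n σ hcomm hbraid (i-1) (by omega) (by omega)
  rw [show i-1+1 = i by omega] at hsh
  -- hsh : S * σ (i-1) = σ i * S
  have key : S⁻¹ * σ i = σ (i-1) * S⁻¹ := by
    calc S⁻¹ * σ i = S⁻¹ * (σ i * S) * S⁻¹ := by group
      _ = S⁻¹ * (S * σ (i-1)) * S⁻¹ := by rw [← hsh]
      _ = σ (i-1) * S⁻¹ := by group
  have hf := hfs (i-1) (by omega) (by omega)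
  rw [show i-1+1 = i by omega] at hf
  -- hf : f * σ (i-1) * f⁻¹ = σ i
  calc σ i * (f * S⁻¹) = (f * σ (i-1) * f⁻¹) * (f * S⁻¹) := by rw [hf]
    _ = f * (σ (i-1) * S⁻¹) := by group
    _ = f * (S⁻¹ * σ i) := by rw [← key]
    _ = (f * S⁻¹) * σ i := by group

include hfn hfa in
lemma hf2 : σ 1 * (f * f) = (f * f) * σ n := by
  calc σ 1 * (f * f) = (f * a * f⁻¹) * (f * f) := by rw [hfa]
    _ = f * a * f := by group
    _ = f * (f * σ n * f⁻¹) * f := by rw [hfn]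
    _ = (f * f) * σ n := by group

include hcomm hbraid hfs hfn hfa hn in
lemma T4 :
    σ 1 * (f * (wprod σ 1 n)⁻¹) * σ 1 * (f * (wprod σ 1 n)⁻¹)
      = (f * (wprod σ 1 n)⁻¹) * σ 1 * (f * (wprod σ 1 n)⁻¹) * σ 1 := by
  set S := wprod σ 1 n with hS
  set Q := wprod σ 2 (n-1) with hQ
  set T := f * S⁻¹ with hT
  have hSQ : S = σ 1 * Q := S_eq n σ hn
  have hTQ : T * Q = Q * T := by
    refine (commute_wprod fun j hj1 hj2 => ?_).eq
    exact (T_comm n σ hcomm hbraid f hfs j hj1 (by omega)).symm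
  have hfT : f = T * S := by rw [hT]; group
  have hC : Q * σ 1 * Q * σ n = σ 1 * Q * σ 1 * Q := by
    have := claimC n σ hcomm hbraid (n-1) 1 (by omega) le_rfl (by omega)
    rw [show (1:ℕ)+1 = 2 by norm_num] at this
    exact this
  have hff : f * f = T * σ 1 * T * (Q * σ 1 * Q) := by
    rw [hfT, hSQ]
    calc (T * (σ 1 * Q)) * (T * (σ 1 * Q))
        = T * σ 1 * (Q * T) * (σ 1 * Q) := by simp only [mul_assoc]
      _ = T * σ 1 * (T * Q) * (σ 1 * Q) := by rw [← hTQ]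
      _ = T * σ 1 * T * (Q * σ 1 * Q) := by simp only [mul_assoc]
  have h2 := hf2 n σ a f hfn hfa
  rw [hff] at h2
  have h3 : (σ 1 * T * σ 1 * T) * (Q * σ 1 * Q) = (T * σ 1 * T * σ 1) * (Q * σ 1 * Q) := by
    calc (σ 1 * T * σ 1 * T) * (Q * σ 1 * Q)
        = σ 1 * (T * σ 1 * T * (Q * σ 1 * Q)) := by simp only [mul_assoc]
      _ = T * σ 1 * T * (Q * σ 1 * Q) * σ n := h2
      _ = (T * σ 1 * T) * (Q * σ 1 * Q * σ n) := by simp only [mul_assoc]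
      _ = (T * σ 1 * T) * (σ 1 * Q * σ 1 * Q) := by rw [hC]
      _ = (T * σ 1 * T * σ 1) * (Q * σ 1 * Q) := by simp only [mul_assoc]
  exact mul_right_cancel h3

end GSystem

end Braid
end Stmt1Aux


namespace Stmt1Aux

section Plumb

variable {α : Type*} {rels : Set (FreeGroup α)}

lemma mk_of (x : α) : PresentedGroup.mk rels (FreeGroup.of x) = PresentedGroup.of x := rfl

lemma mk_rel {x y : FreeGroup α} (h : x * y⁻¹ ∈ rels) :
    PresentedGroup.mk rels x = PresentedGroup.mk rels y := by
  have hN : x * y⁻¹ ∈ Subgroup.normalClosure rels := Subgroup.subset_normalClosure h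
  have h1 : PresentedGroup.mk rels (x * y⁻¹) = 1 := (QuotientGroup.eq_one_iff _).2 hN
  rw [map_mul, map_inv] at h1
  exact mul_inv_eq_one.mp h1

lemma map_wprod {M N : Type*} [Group M] [Group N] (F : M →* N) (σ : ℕ → M) (a l : ℕ) :
    F (wprod σ a l) = wprod (fun i => F (σ i)) a l := by
  simp [wprod, map_list_prod, List.map_map, Function.comp_def]

lemma wprod_congr {M : Type*} [Group M] (σ τ : ℕ → M) (a l : ℕ)
    (h : ∀ j, a ≤ j → j < a + l → σ j = τ j) : wprod σ a l = wprod τ a l := by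
  unfold wprod
  congr 1
  apply List.map_congr_left
  intro x hx
  simp only [List.mem_range'] at hx
  obtain ⟨i, hi, rfl⟩ := hx
  exact h _ (by omega) (by omega)

lemma finRange_prod_eq {M : Type*} [Group M] (n : ℕ) (σ : ℕ → M) (g : Fin n → M)
    (hg : ∀ i : Fin n, σ ((i : ℕ) + 1) = g i) :
    ((List.finRange n).map g).prod = wprod σ 1 n := by
  unfold wprod
  congr 1
  apply List.ext_getElem (by simp)
  intro k h1 h2
  simp only [List.getElem_map, List.getElem_finRange, List.getElem_range']
  rw [← hg]
  congr 1
  simp [Fin.coe_cast]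
  omega

end Plumb

section Inst

variable (n : ℕ)

/-- `σ_i` (1-indexed) in `BraidB n`. -/
noncomputable def σB (i : ℕ) : BraidB n :=
  if h : 1 ≤ i ∧ i ≤ n then PresentedGroup.of (some ⟨i - 1, by omega⟩) else 1

lemma σB_eq (i : ℕ) (h1 : 1 ≤ i) (h2 : i ≤ n) :
    σB n i = PresentedGroup.of (some ⟨i - 1, by omega⟩) := dif_pos ⟨h1, h2⟩

lemma σB_fin (i : Fin n) : σB n ((i : ℕ) + 1) = PresentedGroup.of (some i) := by
  rw [σB_eq n _ (by omega) (by omega)]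
  congr 1

lemma B_rel1 (i j : Fin n) (h : (i : ℕ) + 2 ≤ (j : ℕ)) :
    (PresentedGroup.of (some i) : BraidB n) * PresentedGroup.of (some j)
      = PresentedGroup.of (some j) * PresentedGroup.of (some i) := by
  have := mk_rel (rels := braidRelsB n) (Or.inl ⟨i, j, h, rfl⟩)
  simpa only [map_mul, map_inv, mk_of] using this

lemma B_rel2 (i j : Fin n) (h : (j : ℕ) = (i : ℕ) + 1) :
    (PresentedGroup.of (some i) : BraidB n) * PresentedGroup.of (some j) *
        PresentedGroup.of (some i)
      = PresentedGroup.of (some j) * PresentedGroup.of (some i) *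
        PresentedGroup.of (some j) := by
  have := mk_rel (rels := braidRelsB n) (Or.inr (Or.inl ⟨i, j, h, rfl⟩))
  simpa only [map_mul, map_inv, mk_of] using this

lemma B_rel3 (i : Fin n) (h : 1 ≤ (i : ℕ)) :
    (PresentedGroup.of (some i) : BraidB n) * PresentedGroup.of none
      = PresentedGroup.of none * PresentedGroup.of (some i) := by
  have := mk_rel (rels := braidRelsB n) (Or.inr (Or.inr (Or.inl ⟨i, h, rfl⟩)))
  simpa only [map_mul, map_inv, mk_of] using this

lemma B_rel4 (i : Fin n) (h : (i : ℕ) = 0) :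
    (PresentedGroup.of (some i) : BraidB n) * PresentedGroup.of none *
        PresentedGroup.of (some i) * PresentedGroup.of none
      = PresentedGroup.of none * PresentedGroup.of (some i) *
        PresentedGroup.of none * PresentedGroup.of (some i) := by
  have := mk_rel (rels := braidRelsB n) (Or.inr (Or.inr (Or.inr ⟨i, h, rfl⟩)))
  simpa only [map_mul, map_inv, mk_of] using this

lemma B_hcomm : ∀ i j, 1 ≤ i → i + 2 ≤ j → j ≤ n → σB n i * σB n j = σB n j * σB n i := by
  intro i j h1 h2 h3
  rw [σB_eq n i h1 (by omega), σB_eq n j (by omega) h3]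
  exact B_rel1 n _ _ (show i - 1 + 2 ≤ j - 1 by omega)

lemma B_hbraid : ∀ i, 1 ≤ i → i + 1 ≤ n →
    σB n i * σB n (i+1) * σB n i = σB n (i+1) * σB n i * σB n (i+1) := by
  intro i h1 h2
  rw [σB_eq n i h1 (by omega), σB_eq n (i+1) (by omega) h2]
  exact B_rel2 n _ _ (show i + 1 - 1 = i - 1 + 1 by omega)

lemma B_tc : ∀ i, 2 ≤ i → i ≤ n →
    σB n i * PresentedGroup.of none = PresentedGroup.of none * σB n i := by
  intro i h1 h2
  rw [σB_eq n i (by omega) h2]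
  exact B_rel3 n _ (show 1 ≤ i - 1 by omega)

lemma B_t4 (hn : 2 ≤ n) :
    σB n 1 * PresentedGroup.of none * σB n 1 * PresentedGroup.of none
      = PresentedGroup.of none * σB n 1 * PresentedGroup.of none * σB n 1 := by
  rw [σB_eq n 1 le_rfl (by omega)]
  exact B_rel4 n _ rfl

lemma phiB_eq : phiB n = PresentedGroup.of none * wprod (σB n) 1 n := by
  rw [phiB]
  congr 1
  exact finRange_prod_eq n (σB n) _ (fun i => σB_fin n i)

lemma aB_eq (h : 0 < n) :
    aB n h = PresentedGroup.of none * wprod (σB n) 1 n * σB n n *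
      (PresentedGroup.of none * wprod (σB n) 1 n)⁻¹ := by
  rw [aB, phiB_eq, σB_eq n n (by omega) le_rfl]

/-- `s_i` (1-indexed) in the alternative presentation. -/
noncomputable def sG (i : ℕ) : PresentedGroup (gRels n) :=
  if h : 1 ≤ i ∧ i ≤ n then PresentedGroup.of (Sum.inl ⟨i - 1, by omega⟩) else 1

lemma sG_eq (i : ℕ) (h1 : 1 ≤ i) (h2 : i ≤ n) :
    sG n i = PresentedGroup.of (Sum.inl ⟨i - 1, by omega⟩) := dif_pos ⟨h1, h2⟩

lemma sG_fin (i : Fin n) : sG n ((i : ℕ) + 1) = PresentedGroup.of (Sum.inl i) := by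
  rw [sG_eq n _ (by omega) (by omega)]
  congr 1

lemma G_rel1 (i j : Fin n) (h : (i : ℕ) + 2 ≤ (j : ℕ)) :
    (PresentedGroup.of (Sum.inl i) : PresentedGroup (gRels n)) * PresentedGroup.of (Sum.inl j)
      = PresentedGroup.of (Sum.inl j) * PresentedGroup.of (Sum.inl i) := by
  have := mk_rel (rels := gRels n) (Or.inl ⟨i, j, h, rfl⟩)
  simpa only [map_mul, map_inv, mk_of] using this

lemma G_rel2 (i j : Fin n) (h : (j : ℕ) = (i : ℕ) + 1) :
    (PresentedGroup.of (Sum.inl i) : PresentedGroup (gRels n)) * PresentedGroup.of (Sum.inl j) *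
        PresentedGroup.of (Sum.inl i)
      = PresentedGroup.of (Sum.inl j) * PresentedGroup.of (Sum.inl i) *
        PresentedGroup.of (Sum.inl j) := by
  have := mk_rel (rels := gRels n) (Or.inr (Or.inl ⟨i, j, h, rfl⟩))
  simpa only [map_mul, map_inv, mk_of] using this

lemma G_rel5 (i j : Fin n) (h : (j : ℕ) = (i : ℕ) + 1) :
    (PresentedGroup.of (Sum.inr true) : PresentedGroup (gRels n)) *
        PresentedGroup.of (Sum.inl i) * (PresentedGroup.of (Sum.inr true))⁻¹
      = PresentedGroup.of (Sum.inl j) := by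
  have := mk_rel (rels := gRels n)
    (Or.inr (Or.inr (Or.inr (Or.inr (Or.inl ⟨i, j, h, rfl⟩)))))
  simpa only [map_mul, map_inv, mk_of] using this

lemma G_rel6 (i : Fin n) (h : (i : ℕ) + 1 = n) :
    (PresentedGroup.of (Sum.inr true) : PresentedGroup (gRels n)) *
        PresentedGroup.of (Sum.inl i) * (PresentedGroup.of (Sum.inr true))⁻¹
      = PresentedGroup.of (Sum.inr false) := by
  have := mk_rel (rels := gRels n)
    (Or.inr (Or.inr (Or.inr (Or.inr (Or.inr (Or.inl ⟨i, h, rfl⟩))))))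
  simpa only [map_mul, map_inv, mk_of] using this

lemma G_rel7 (i : Fin n) (h : (i : ℕ) = 0) :
    (PresentedGroup.of (Sum.inr true) : PresentedGroup (gRels n)) *
        PresentedGroup.of (Sum.inr false) * (PresentedGroup.of (Sum.inr true))⁻¹
      = PresentedGroup.of (Sum.inl i) := by
  have := mk_rel (rels := gRels n)
    (Or.inr (Or.inr (Or.inr (Or.inr (Or.inr (Or.inr ⟨i, h, rfl⟩))))))
  simpa only [map_mul, map_inv, mk_of] using this

lemma G_hcomm : ∀ i j, 1 ≤ i → i + 2 ≤ j → j ≤ n → sG n i * sG n j = sG n j * sG n i := by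
  intro i j h1 h2 h3
  rw [sG_eq n i h1 (by omega), sG_eq n j (by omega) h3]
  exact G_rel1 n _ _ (show i - 1 + 2 ≤ j - 1 by omega)

lemma G_hbraid : ∀ i, 1 ≤ i → i + 1 ≤ n →
    sG n i * sG n (i+1) * sG n i = sG n (i+1) * sG n i * sG n (i+1) := by
  intro i h1 h2
  rw [sG_eq n i h1 (by omega), sG_eq n (i+1) (by omega) h2]
  exact G_rel2 n _ _ (show i + 1 - 1 = i - 1 + 1 by omega)

lemma G_fs : ∀ i, 1 ≤ i → i + 1 ≤ n →
    PresentedGroup.of (Sum.inr true) * sG n i * (PresentedGroup.of (Sum.inr true))⁻¹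
      = sG n (i+1) := by
  intro i h1 h2
  rw [sG_eq n i h1 (by omega), sG_eq n (i+1) (by omega) h2]
  exact G_rel5 n _ _ (show i + 1 - 1 = i - 1 + 1 by omega)

lemma G_fn (hn : 2 ≤ n) :
    PresentedGroup.of (Sum.inr true) * sG n n * (PresentedGroup.of (Sum.inr true))⁻¹
      = PresentedGroup.of (Sum.inr false) := by
  rw [sG_eq n n (by omega) le_rfl]
  exact G_rel6 n _ (show n - 1 + 1 = n by omega)

lemma G_fa (hn : 2 ≤ n) :
    PresentedGroup.of (Sum.inr true) * PresentedGroup.of (Sum.inr false) *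
        (PresentedGroup.of (Sum.inr true))⁻¹ = sG n 1 := by
  rw [sG_eq n 1 le_rfl (by omega)]
  exact G_rel7 n _ rfl

end Inst
end Stmt1Aux

namespace Stmt1Aux

variable (n : ℕ)

/-- The images of the generators of the alternative presentation in `BraidB n`. -/
noncomputable def eFun : Fin n ⊕ Bool → BraidB n
  | Sum.inl i => PresentedGroup.of (some i)
  | Sum.inr false => PresentedGroup.of none * wprod (σB n) 1 n * σB n n *
      (PresentedGroup.of none * wprod (σB n) 1 n)⁻¹
  | Sum.inr true => PresentedGroup.of none * wprod (σB n) 1 n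

@[simp] lemma eFun_inl (i : Fin n) : eFun n (Sum.inl i) = PresentedGroup.of (some i) := rfl
@[simp] lemma eFun_false : eFun n (Sum.inr false)
    = PresentedGroup.of none * wprod (σB n) 1 n * σB n n *
      (PresentedGroup.of none * wprod (σB n) 1 n)⁻¹ := rfl
@[simp] lemma eFun_true : eFun n (Sum.inr true)
    = PresentedGroup.of none * wprod (σB n) 1 n := rfl

/-- The images of the generators of `BraidB n` in the alternative presentation. -/
noncomputable def gFun : Option (Fin n) → PresentedGroup (gRels n)
  | none => PresentedGroup.of (Sum.inr true) * (wprod (sG n) 1 n)⁻¹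
  | some i => PresentedGroup.of (Sum.inl i)

@[simp] lemma gFun_some (i : Fin n) : gFun n (some i) = PresentedGroup.of (Sum.inl i) := rfl
@[simp] lemma gFun_none : gFun n none
    = PresentedGroup.of (Sum.inr true) * (wprod (sG n) 1 n)⁻¹ := rfl

lemma he (hn : 2 ≤ n) : ∀ r ∈ gRels n, FreeGroup.lift (eFun n) r = 1 := by
  intro r hr
  rcases hr with ⟨i,j,hij,rfl⟩|⟨i,j,hij,rfl⟩|⟨i,hi1,hi2,rfl⟩|⟨i,hor,rfl⟩|⟨i,j,hij,rfl⟩|⟨i,hi,rfl⟩|⟨i,hi,rfl⟩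
  · simp only [map_mul, map_inv, FreeGroup.lift_apply_of, eFun_inl, mul_inv_eq_one]
    exact B_rel1 n i j hij
  · simp only [map_mul, map_inv, FreeGroup.lift_apply_of, eFun_inl, mul_inv_eq_one]
    exact B_rel2 n i j hij
  · simp only [map_mul, map_inv, FreeGroup.lift_apply_of, eFun_inl, eFun_false, mul_inv_eq_one]
    rw [← σB_fin n i]
    exact a_comm n (σB n) (B_hcomm n) (B_hbraid n) (PresentedGroup.of none) hn (B_tc n)
      (B_t4 n hn) ((i : ℕ)+1) (by omega) (by omega)
  · simp only [map_mul, map_inv, FreeGroup.lift_apply_of, eFun_inl, eFun_false, mul_inv_eq_one]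
    rw [← σB_fin n i]
    rcases hor with hi0 | hi1
    · rw [hi0]
      simp only [Nat.zero_add]
      exact a_rel1 n (σB n) (B_hcomm n) (B_hbraid n) (PresentedGroup.of none) hn (B_tc n)
        (B_t4 n hn)
    · rw [hi1]
      exact a_reln n (σB n) (B_hcomm n) (B_hbraid n) (PresentedGroup.of none) hn (B_tc n)
        (B_t4 n hn)
  · simp only [map_mul, map_inv, FreeGroup.lift_apply_of, eFun_inl, eFun_true, mul_inv_eq_one]
    rw [← σB_fin n i, ← σB_fin n j]
    have := phi_conj n (σB n) (B_hcomm n) (B_hbraid n) (PresentedGroup.of none) hn (B_tc n)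
      ((i : ℕ)+1) (by omega) (by omega)
    rwa [show (i : ℕ)+1+1 = (j : ℕ)+1 by omega] at this
  · simp only [map_mul, map_inv, FreeGroup.lift_apply_of, eFun_inl, eFun_true, eFun_false,
      mul_inv_eq_one]
    rw [← σB_fin n i, hi]
  · simp only [map_mul, map_inv, FreeGroup.lift_apply_of, eFun_inl, eFun_true, eFun_false,
      mul_inv_eq_one]
    rw [← σB_fin n i, hi]
    simp only [Nat.zero_add]
    exact phi_aconj n (σB n) (B_hcomm n) (B_hbraid n) (PresentedGroup.of none) hn (B_tc n)
      (B_t4 n hn)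

lemma hg (hn : 2 ≤ n) : ∀ r ∈ braidRelsB n, FreeGroup.lift (gFun n) r = 1 := by
  intro r hr
  rcases hr with ⟨i,j,hij,rfl⟩|⟨i,j,hij,rfl⟩|⟨i,hi,rfl⟩|⟨i,hi,rfl⟩
  · simp only [map_mul, map_inv, FreeGroup.lift_apply_of, gFun_some, mul_inv_eq_one]
    exact G_rel1 n i j hij
  · simp only [map_mul, map_inv, FreeGroup.lift_apply_of, gFun_some, mul_inv_eq_one]
    exact G_rel2 n i j hij
  · simp only [map_mul, map_inv, FreeGroup.lift_apply_of, gFun_some, gFun_none, mul_inv_eq_one]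
    rw [← sG_fin n i]
    exact T_comm n (sG n) (G_hcomm n) (G_hbraid n) (PresentedGroup.of (Sum.inr true))
      (G_fs n) ((i : ℕ)+1) (by omega) (by omega)
  · simp only [map_mul, map_inv, FreeGroup.lift_apply_of, gFun_some, gFun_none, mul_inv_eq_one]
    rw [← sG_fin n i, hi]
    simp only [Nat.zero_add]
    exact T4 n (sG n) (G_hcomm n) (G_hbraid n) (PresentedGroup.of (Sum.inr false))
      (PresentedGroup.of (Sum.inr true)) hn (G_fs n) (G_fn n hn) (G_fa n hn)

/-- The homomorphism from the alternative presentation to `BraidB n`. -/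
noncomputable def eHom (hn : 2 ≤ n) : PresentedGroup (gRels n) →* BraidB n :=
  PresentedGroup.toGroup (he n hn)

/-- The homomorphism from `BraidB n` to the alternative presentation. -/
noncomputable def gHom (hn : 2 ≤ n) : BraidB n →* PresentedGroup (gRels n) :=
  PresentedGroup.toGroup (hg n hn)

variable (hn : 2 ≤ n)

lemma gHom_σB (j : ℕ) (h1 : 1 ≤ j) (h2 : j ≤ n) : gHom n hn (σB n j) = sG n j := by
  rw [σB_eq n j h1 h2, sG_eq n j h1 h2, gHom, PresentedGroup.toGroup.of, gFun_some]

lemma gHom_W : gHom n hn (wprod (σB n) 1 n) = wprod (sG n) 1 n := by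
  rw [map_wprod]
  exact wprod_congr _ _ _ _ (fun j hj1 hj2 => gHom_σB n hn j hj1 (by omega))

lemma gHom_phi : gHom n hn (PresentedGroup.of none * wprod (σB n) 1 n)
    = PresentedGroup.of (Sum.inr true) := by
  rw [map_mul, gHom_W]
  have h0 : gHom n hn (PresentedGroup.of none) = gFun n none := PresentedGroup.toGroup.of _
  rw [h0, gFun_none]
  exact inv_mul_cancel_right _ _

lemma eHom_sG (j : ℕ) (h1 : 1 ≤ j) (h2 : j ≤ n) : eHom n hn (sG n j) = σB n j := by
  rw [σB_eq n j h1 h2, sG_eq n j h1 h2, eHom, PresentedGroup.toGroup.of, eFun_inl]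

lemma eHom_W : eHom n hn (wprod (sG n) 1 n) = wprod (σB n) 1 n := by
  rw [map_wprod]
  exact wprod_congr _ _ _ _ (fun j hj1 hj2 => eHom_sG n hn j hj1 (by omega))

lemma comp_ge : (gHom n hn).comp (eHom n hn) = MonoidHom.id _ := by
  apply PresentedGroup.ext
  rintro (i | b)
  · simp only [MonoidHom.comp_apply, MonoidHom.id_apply, eHom, gHom,
      PresentedGroup.toGroup.of, eFun_inl, gFun_some]
  · cases b
    · have h1 : eHom n hn (PresentedGroup.of (Sum.inr false)) = eFun n (Sum.inr false) :=
        PresentedGroup.toGroup.of _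
      simp only [MonoidHom.comp_apply, MonoidHom.id_apply, h1, eFun_false]
      rw [map_mul, map_mul, map_inv, gHom_phi, gHom_σB n hn n (by omega) le_rfl]
      exact G_fn n hn
    · have h1 : eHom n hn (PresentedGroup.of (Sum.inr true)) = eFun n (Sum.inr true) :=
        PresentedGroup.toGroup.of _
      simp only [MonoidHom.comp_apply, MonoidHom.id_apply, h1, eFun_true]
      exact gHom_phi n hn

lemma comp_eg : (eHom n hn).comp (gHom n hn) = MonoidHom.id _ := by
  apply PresentedGroup.ext
  rintro (_ | i)
  · have h1 : gHom n hn (PresentedGroup.of none) = gFun n none := PresentedGroup.toGroup.of _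
    simp only [MonoidHom.comp_apply, MonoidHom.id_apply, h1, gFun_none]
    rw [map_mul, map_inv, eHom_W]
    have h2 : eHom n hn (PresentedGroup.of (Sum.inr true)) = eFun n (Sum.inr true) :=
      PresentedGroup.toGroup.of _
    rw [h2, eFun_true]
    exact mul_inv_cancel_right _ _
  · simp only [MonoidHom.comp_apply, MonoidHom.id_apply, eHom, gHom,
      PresentedGroup.toGroup.of, eFun_inl, gFun_some]

end Stmt1Aux

theorem stmt_1 (n : ℕ) (hn : 2 ≤ n) :
    ∃ e : PresentedGroup (gRels n) ≃* BraidB n,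
      (∀ i : Fin n, e (PresentedGroup.of (Sum.inl i)) = PresentedGroup.of (some i)) ∧
      e (PresentedGroup.of (Sum.inr false)) = aB n (by omega) ∧
      e (PresentedGroup.of (Sum.inr true)) = phiB n := by
  refine ⟨MonoidHom.toMulEquiv (Stmt1Aux.eHom n hn) (Stmt1Aux.gHom n hn)
    (Stmt1Aux.comp_ge n hn) (Stmt1Aux.comp_eg n hn), ?_, ?_, ?_⟩
  · intro i
    show Stmt1Aux.eHom n hn (PresentedGroup.of (Sum.inl i)) = _
    rw [Stmt1Aux.eHom, PresentedGroup.toGroup.of, Stmt1Aux.eFun_inl]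
  · show Stmt1Aux.eHom n hn (PresentedGroup.of (Sum.inr false)) = _
    rw [Stmt1Aux.eHom, PresentedGroup.toGroup.of, Stmt1Aux.eFun_false,
      Stmt1Aux.aB_eq n (by omega)]
  · show Stmt1Aux.eHom n hn (PresentedGroup.of (Sum.inr true)) = _
    rw [Stmt1Aux.eHom, PresentedGroup.toGroup.of, Stmt1Aux.eFun_true, Stmt1Aux.phiB_eq n]
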